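/- Let p be an odd prime. Then ℤ/pℤ admits at least p² - 2p antiautomorphisms. -/

import Mathlib

theorem card_antiautomorphisms_ge (p : ℕ) (hp : p.Prime) (hodd : Odd p) :
    p ^ 2 - 2 * p ≤
      {f : ZMod p → ZMod p | Function.Bijective f ∧
        Function.Injective (fun x => x - f x)}.ncard := by
  classical
  haveI : Fact p.Prime := ⟨hp⟩
  set S := {f : ZMod p → ZMod p | Function.Bijective f ∧
      Function.Injective (fun x => x - f x)} with hSdef
  have hSfin : S.Finite := Set.toFinite _
  -- the finset of parameters (a, b) with a ∉ {0, 1}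
  let A : Finset (ZMod p × ZMod p) := ({0, 1}ᶜ : Finset (ZMod p)) ×ˢ Finset.univ
  let F : ZMod p × ZMod p → (ZMod p → ZMod p) := fun q x => q.1 * x + q.2
  have hFinj : Set.InjOn F A := by
    intro q₁ _ q₂ _ h
    have h0 := congrFun h 0
    have h1 := congrFun h 1
    simp only [F, mul_zero, zero_add, mul_one] at h0 h1
    have : q₁.1 = q₂.1 := by
      have := h1
      rw [h0] at this
      exact add_right_cancel this
    exact Prod.ext this h0
  have hmem : ∀ q ∈ A, F q ∈ S := by
    rintro ⟨a, b⟩ hq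
    simp only [A, Finset.mem_product, Finset.mem_compl, Finset.mem_insert,
      Finset.mem_singleton] at hq
    have ha0 : a ≠ 0 := fun h => hq.1 (Or.inl h)
    have ha1 : a ≠ 1 := fun h => hq.1 (Or.inr h)
    constructor
    · constructor
      · intro x y hxy
        simp only [F] at hxy
        have := add_right_cancel hxy
        exact mul_left_cancel₀ ha0 this
      · intro y
        refine ⟨a⁻¹ * (y - b), ?_⟩
        simp only [F]
        field_simp
        ring
    · intro x y hxy
      simp only [F] at hxy
      have hxy' : (1 - a) * x = (1 - a) * y := by ring_nf; ring_nf at hxy; linear_combination hxy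
      have h1a : (1 : ZMod p) - a ≠ 0 := sub_ne_zero.mpr (Ne.symm ha1)
      exact mul_left_cancel₀ h1a hxy'
  -- count
  have hcard : ((A.image F).card : ℕ) = (p - 2) * p := by
    rw [Finset.card_image_of_injOn hFinj]
    have h01 : (0 : ZMod p) ≠ 1 := by
      haveI : Nontrivial (ZMod p) := ZMod.nontrivial_iff.mpr hp.one_lt.ne'
      exact zero_ne_one
    have : ({0, 1} : Finset (ZMod p)).card = 2 := by
      rw [Finset.card_insert_of_notMem (by simpa using h01), Finset.card_singleton]
    simp only [A, Finset.card_product, Finset.card_compl, this, ZMod.card,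
      Finset.card_univ]
  have hsub : (A.image F) ⊆ hSfin.toFinset := by
    intro f hf
    rw [Set.Finite.mem_toFinset]
    obtain ⟨q, hq, rfl⟩ := Finset.mem_image.mp hf
    exact hmem q hq
  have hle : (p - 2) * p ≤ S.ncard := by
    rw [Set.ncard_eq_toFinset_card' S]
    have := Finset.card_le_card hsub
    rwa [hcard, Set.Finite.toFinset_eq_toFinset] at this
  calc p ^ 2 - 2 * p = (p - 2) * p := by rw [Nat.sub_mul, pow_two]
    _ ≤ S.ncard := hle
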